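/- Let X be a geodesic Peano continuum that is semi-locally simply connected, with basepoint x₀, and let δ > 0 be such that every loop in X of diameter less than 4δ is null-homotopic. Then for every [α] ∈ X̃, the endpoint projection p restricted to the open ball B([α], δ) in X̃ is an isometry onto the open ball B(α(1), δ) in X. -/

import Mathlib

open Metric Set ENNReal NNReal

noncomputable section

/-- Arc length of a path in a pseudo-metric space, valued in `ℝ≥0∞`. -/
def pathLen {X : Type*} [PseudoMetricSpace X] {x y : X} (γ : Path x y) : ℝ≥0∞ :=
  eVariationOn γ Set.univ

/-- A metric space is geodesic if any two points are joined by a path whose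
length equals their distance. -/
def IsGeodesicSpace (X : Type*) [MetricSpace X] : Prop :=
  ∀ x y : X, ∃ γ : Path x y, pathLen γ = ENNReal.ofReal (dist x y)

/-- Semi-local simple connectedness: every point has a neighborhood `U` such
that every loop contained in `U` is null-homotopic in `X`. -/
def SemiLocallySimplyConnected (X : Type*) [TopologicalSpace X] : Prop :=
  ∀ x : X, ∃ U ∈ nhds x, ∀ γ : Path x x, Set.range γ ⊆ U → γ.Homotopic (Path.refl x)

/-- A group is finitely presented. -/
def Group.FinitelyPresented (G : Type*) [Group G] : Prop :=
  ∃ (n : ℕ) (rels : Set (FreeGroup (Fin n))), rels.Finite ∧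
    Nonempty (PresentedGroup rels ≃* G)

/-- The space of homotopy-rel-endpoints classes of paths starting at `x₀`. -/
def PathsFrom {X : Type*} [TopologicalSpace X] (x₀ : X) : Type _ :=
  Σ y : X, Path.Homotopic.Quotient x₀ y

/-- The length-infimum distance on `PathsFrom x₀`, valued in `ℝ≥0∞`:
the infimum of lengths of paths `γ` from `α(1)` to `β(1)` such that
`α ∗ γ` is homotopic rel endpoints to `β`. -/
def dTilde {X : Type*} [MetricSpace X] {x₀ : X} (a b : PathsFrom x₀) : ℝ≥0∞ :=
  ⨅ γ : {γ : Path a.1 b.1 // a.2.trans (Path.Homotopic.Quotient.mk γ) = b.2}, pathLen γ.1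

/-- The endpoint projection `X̃ → X`. -/
def endpointProj {X : Type*} [TopologicalSpace X] {x₀ : X} (a : PathsFrom x₀) : X := a.1

/-- The action of a class of a loop `β` at `x₀` on `PathsFrom x₀`, sending `[α]` to `[β ∗ α]`. -/
def loopAct {X : Type*} [TopologicalSpace X] {x₀ : X}
    (g : Path.Homotopic.Quotient x₀ x₀) (a : PathsFrom x₀) : PathsFrom x₀ :=
  ⟨a.1, g.trans a.2⟩

/-- Uniform path connectedness. -/
def UniformlyPathConnected (X : Type*) [MetricSpace X] : Prop :=
  ∃ α : ℝ → ℝ, ∀ x y : X, x ≠ y →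
    ∃ γ : Path x y, Metric.diam (Set.range γ) ≤ α (dist x y)

/-- `π₁(X, x₀)` is uniformly generated: for some `R > 0` it is generated by
classes of loops of diameter at most `R`, conjugated to the basepoint by arbitrary paths. -/
def UniformlyGeneratedPi1 (X : Type*) [MetricSpace X] (x₀ : X) : Prop :=
  ∃ R : ℝ, 0 < R ∧ Subgroup.closure
    {g : FundamentalGroup X x₀ | ∃ (y : X) (p : Path x₀ y) (γ : Path y y),
      Metric.diam (Set.range γ) ≤ R ∧
      g = FundamentalGroup.fromPath (X := TopCat.of X) ⟦(p.trans γ).trans p.symm⟧} = ⊤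

/-- A list of points of `X` is an `r`-chain: consecutive points are at distance at most `r`. -/
def IsChain' {X : Type*} [MetricSpace X] (r : ℝ) : List X → Prop :=
  List.Chain' (fun x y => dist x y ≤ r)

/-- An elementary move at scale `R` between based chains: insertion of one interior
point, with both chains being `R`-chains. -/
def ChainMove {X : Type*} [MetricSpace X] (R : ℝ) (l₁ l₂ : List X) : Prop :=
  ∃ (p q : List X) (x : X), p ≠ [] ∧ q ≠ [] ∧
    l₁ = p ++ q ∧ l₂ = p ++ x :: q ∧ IsChain' R l₁ ∧ IsChain' R l₂

/-- A based `r`-loop is `R`-null-homotopic: it can be reduced to the trivial loop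
by elementary moves at scale `R`. -/
def ChainNull {X : Type*} [MetricSpace X] (R : ℝ) (x₀ : X) (l : List X) : Prop :=
  Relation.ReflTransGen (fun a b => ChainMove R a b ∨ ChainMove R b a) l [x₀, x₀]

/-- Coarse 1-connectedness of a metric space, via chains (edge-paths in Rips
complexes): `X` is `t`-chain connected for some `t > 0`, and every `r`-loop can
be filled at some uniformly larger scale `R`. -/
def CoarselySimplyConnected (X : Type*) [MetricSpace X] : Prop :=
  (∃ t : ℝ, 0 < t ∧ ∀ x y : X, ∃ l : List X, IsChain' t l ∧
      l.head? = some x ∧ l.getLast? = some y) ∧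
  ∀ r : ℝ, 0 < r → ∃ R : ℝ, r ≤ R ∧ ∀ (x₀ : X) (l : List X),
    IsChain' r l → l.head? = some x₀ → l.getLast? = some x₀ → ChainNull R x₀ l

end



attribute [local instance] Path.Homotopic.setoid

/-- If the loop `γ ∗ η⁻¹` is null-homotopic, then `⟦γ⟧ = ⟦η⟧`. -/
lemma quot_eq_of_trans_symm_null {Y : Type*} [TopologicalSpace Y] {x y : Y}
    (γ η : Path x y) (h : (γ.trans η.symm).Homotopic (Path.refl x)) :
    (⟦γ⟧ : Path.Homotopic.Quotient x y) = ⟦η⟧ := by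
  apply Quotient.sound
  have h1 : γ.Homotopic (γ.trans (Path.refl y)) :=
    (Path.Homotopic.equivalence.symm ⟨Path.Homotopy.transRefl γ⟩)
  have h2 : (γ.trans (Path.refl y)).Homotopic (γ.trans (η.symm.trans η)) :=
    (Path.Homotopic.refl γ).hcomp ⟨Path.Homotopy.reflSymmTrans η⟩
  have h3 : (γ.trans (η.symm.trans η)).Homotopic ((γ.trans η.symm).trans η) :=
    Path.Homotopic.equivalence.symm ⟨Path.Homotopy.transAssoc γ η.symm η⟩
  have h4 : ((γ.trans η.symm).trans η).Homotopic ((Path.refl x).trans η) :=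
    h.hcomp (Path.Homotopic.refl η)
  have h5 : ((Path.refl x).trans η).Homotopic η := ⟨Path.Homotopy.reflTrans η⟩
  exact (((h1.trans h2).trans h3).trans h4).trans h5

/-- Endpoint distance bounds below the length of any path. -/
lemma edist_le_pathLen {X : Type*} [PseudoMetricSpace X] {x y : X} (γ : Path x y)
    (s t : unitInterval) : edist (γ s) (γ t) ≤ pathLen γ :=
  eVariationOn.edist_le (f := ⇑γ) (Set.mem_univ s) (Set.mem_univ t)

/-- The diameter of the range of a path is at most its length. -/
lemma diam_range_le_of_pathLen_le {X : Type*} [PseudoMetricSpace X] {x y : X}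
    (γ : Path x y) {C : ℝ} (hC : 0 ≤ C) (h : pathLen γ ≤ ENNReal.ofReal C) :
    Metric.diam (Set.range γ) ≤ C := by
  apply Metric.diam_le_of_forall_dist_le hC
  rintro _ ⟨s, rfl⟩ _ ⟨t, rfl⟩
  have h2 : edist (γ s) (γ t) ≤ ENNReal.ofReal C := (edist_le_pathLen γ s t).trans h
  rw [edist_dist] at h2
  exact (ENNReal.ofReal_le_ofReal_iff hC).mp h2

/-- on each `δ`-ball the endpoint projection is an isometry onto
the `δ`-ball around the endpoint. -/
theorem stmt8 {X : Type*} [MetricSpace X] [CompactSpace X] [ConnectedSpace X]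
    [LocallyConnectedSpace X] (hg : IsGeodesicSpace X)
    (hs : SemiLocallySimplyConnected X) (x₀ : X)
    (m : MetricSpace (PathsFrom x₀))
    (hm : ∀ a b : PathsFrom x₀,
      ENNReal.ofReal (letI := m; dist a b) = dTilde a b)
    (δ : ℝ) (hδ : 0 < δ)
    (hnull : ∀ (z : X) (γ : Path z z),
      Metric.diam (Set.range γ) < 4 * δ → γ.Homotopic (Path.refl z))
    (a : PathsFrom x₀) :
    letI := m
    Set.BijOn (endpointProj (x₀ := x₀)) (Metric.ball a δ) (Metric.ball a.1 δ) ∧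
    ∀ b c : PathsFrom x₀, b ∈ Metric.ball a δ → c ∈ Metric.ball a δ →
      dist (endpointProj b) (endpointProj c) = dist b c := by
  letI := m
  have hm' : ∀ a b : PathsFrom x₀, ENNReal.ofReal (dist a b) = dTilde a b := hm
  -- the projection is 1-Lipschitz
  have proj_le : ∀ b c : PathsFrom x₀, dist b.1 c.1 ≤ dist b c := by
    intro b c
    have h1 : edist b.1 c.1 ≤ dTilde b c := by
      refine le_iInf fun γ => ?_
      have := edist_le_pathLen γ.1 0 1
      rwa [γ.1.source, γ.1.target] at this
    rw [← hm', edist_dist] at h1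
    exact (ENNReal.ofReal_le_ofReal_iff dist_nonneg).mp h1
  -- key: for b, c in the ball, dist b c ≤ dist b.1 c.1
  have key : ∀ b c : PathsFrom x₀, dist b a < δ → dist c a < δ →
      dist b c ≤ dist b.1 c.1 := by
    intro b c hb hc
    obtain ⟨γ, hγ⟩ := hg b.1 c.1
    have hb1 : dist b.1 a.1 < δ := lt_of_le_of_lt (proj_le b a) hb
    have hc1 : dist c.1 a.1 < δ := lt_of_le_of_lt (proj_le c a) hc
    have hbc1 : dist b.1 c.1 < 2 * δ := by
      have := dist_triangle b.1 a.1 c.1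
      rw [dist_comm c.1 a.1] at hc1
      linarith
    have hbc : dist b c < 2 * δ := by
      have := dist_triangle b a c
      rw [dist_comm c a] at hc
      linarith
    have hlt : dTilde b c < ENNReal.ofReal (2 * δ) := by
      rw [← hm']
      exact (ENNReal.ofReal_lt_ofReal_iff (by linarith)).mpr hbc
    obtain ⟨η, hηlen⟩ := iInf_lt_iff.mp hlt
    have hγdiam : Metric.diam (Set.range ⇑γ) ≤ dist b.1 c.1 :=
      diam_range_le_of_pathLen_le γ dist_nonneg hγ.le
    have hηdiam : Metric.diam (Set.range ⇑η.1) ≤ 2 * δ :=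
      diam_range_le_of_pathLen_le η.1 (by linarith) hηlen.le
    have hloop : Metric.diam (Set.range ⇑(γ.trans η.1.symm)) < 4 * δ := by
      rw [Path.trans_range, Path.symm_range]
      have hne : (Set.range ⇑γ ∩ Set.range ⇑η.1).Nonempty :=
        ⟨c.1, ⟨1, γ.target⟩, ⟨1, η.1.target⟩⟩
      calc Metric.diam (Set.range ⇑γ ∪ Set.range ⇑η.1)
          ≤ Metric.diam (Set.range ⇑γ) + Metric.diam (Set.range ⇑η.1) :=
            Metric.diam_union' hne
        _ < 4 * δ := by linarith
    have heq : (⟦γ⟧ : Path.Homotopic.Quotient b.1 c.1) = ⟦η.1⟧ :=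
      quot_eq_of_trans_symm_null γ η.1 (hnull b.1 (γ.trans η.1.symm) hloop)
    have hle : dTilde b c ≤ pathLen γ :=
      iInf_le_of_le ⟨γ, by rw [show Path.Homotopic.Quotient.mk γ = Path.Homotopic.Quotient.mk η.1 from heq]; exact η.2⟩ le_rfl
    rw [← hm', hγ] at hle
    exact (ENNReal.ofReal_le_ofReal_iff dist_nonneg).mp hle
  have iso : ∀ b c : PathsFrom x₀, b ∈ Metric.ball a δ → c ∈ Metric.ball a δ →
      dist (endpointProj b) (endpointProj c) = dist b c := by
    intro b c hb hc
    rw [Metric.mem_ball] at hb hc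
    exact le_antisymm (proj_le b c) (key b c hb hc)
  refine ⟨⟨?_, ?_, ?_⟩, iso⟩
  · intro b hb
    rw [Metric.mem_ball] at hb ⊢
    exact lt_of_le_of_lt (proj_le b a) hb
  · intro b hb c hc hbc
    have h0 : dist b c = 0 := by
      rw [← iso b c hb hc, show endpointProj b = endpointProj c from hbc, dist_self]
    exact dist_eq_zero.mp h0
  · intro y hy
    rw [Metric.mem_ball] at hy
    obtain ⟨γ, hγ⟩ := hg a.1 y
    refine ⟨(⟨y, a.2.trans (Path.Homotopic.Quotient.mk γ)⟩ : PathsFrom x₀), ?_, rfl⟩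
    refine Metric.mem_ball.mpr ((dist_comm _ _).trans_lt ?_)
    rw [dist_comm] at hy
    have hle : dTilde a (⟨y, a.2.trans (Path.Homotopic.Quotient.mk γ)⟩ : PathsFrom x₀) ≤ pathLen γ :=
      iInf_le_of_le ⟨γ, rfl⟩ le_rfl
    replace hle := ((hm' _ _).trans_le hle).trans_eq hγ
    have := (ENNReal.ofReal_le_ofReal_iff dist_nonneg).mp hle
    exact lt_of_le_of_lt this hy
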